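/- Let Ξ be a finite multiset of complex 8-th roots of unity whose sum h lies in ℤ and such that Σ_{ζ∈Ξ} ζ⁸ = 141 (i.e., Ξ has cardinality 141). Then h is odd. -/

import Mathlib

noncomputable def z8 : ℂ := ((Real.sqrt 2 / 2 : ℝ) : ℂ) * (1 + Complex.I)

lemma z8_sq : z8 ^ 2 = Complex.I := by
  have sqc : ((Real.sqrt 2 : ℝ) : ℂ) ^ 2 = 2 := by
    have : (Real.sqrt 2) ^ 2 = 2 := Real.sq_sqrt (by norm_num)
    exact_mod_cast congrArg Complex.ofReal this
  unfold z8
  push_cast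
  linear_combination ((1 + Complex.I) ^ 2 / 4) * sqc + (1 / 2) * Complex.I_sq

lemma root_decomp (w : ℂ) (hw : w ^ 8 = 1) :
    ∃ a b c d : ℤ, w = (a : ℂ) + (b : ℂ) * Complex.I + ((c : ℂ) + (d : ℂ) * Complex.I) * z8 ∧
      Odd (a + b + c + d) := by
  have h4 : (w ^ 4 - 1) * (w ^ 4 + 1) = 0 := by linear_combination hw
  rcases mul_eq_zero.mp h4 with h | h
  · have h2 : (w ^ 2 - 1) * (w ^ 2 + 1) = 0 := by linear_combination h
    rcases mul_eq_zero.mp h2 with h | h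
    · rcases mul_eq_zero.mp (show (w - 1) * (w + 1) = 0 by linear_combination h) with h | h
      · exact ⟨1, 0, 0, 0, by push_cast; linear_combination h, by decide⟩
      · exact ⟨-1, 0, 0, 0, by push_cast; linear_combination h, by decide⟩
    · rcases mul_eq_zero.mp
        (show (w - Complex.I) * (w + Complex.I) = 0 by linear_combination h - Complex.I_sq)
        with h | h
      · exact ⟨0, 1, 0, 0, by push_cast; linear_combination h, by decide⟩
      · exact ⟨0, -1, 0, 0, by push_cast; linear_combination h, by decide⟩
  · have h2 : (w ^ 2 - Complex.I) * (w ^ 2 + Complex.I) = 0 := by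
      linear_combination h - Complex.I_sq
    rcases mul_eq_zero.mp h2 with h | h
    · rcases mul_eq_zero.mp (show (w - z8) * (w + z8) = 0 by linear_combination h - z8_sq)
        with h | h
      · exact ⟨0, 0, 1, 0, by push_cast; linear_combination h, by decide⟩
      · exact ⟨0, 0, -1, 0, by push_cast; linear_combination h, by decide⟩
    · rcases mul_eq_zero.mp (show (w - Complex.I * z8) * (w + Complex.I * z8) = 0 by
        linear_combination h - z8 ^ 2 * Complex.I_sq + z8_sq) with h | h
      · exact ⟨0, 0, 0, 1, by push_cast; linear_combination h, by decide⟩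
      · exact ⟨0, 0, 0, -1, by push_cast; linear_combination h, by decide⟩

lemma sum_decomp (Ξ : Multiset ℂ) (hr : ∀ w ∈ Ξ, w ^ 8 = 1) :
    ∃ a b c d : ℤ, Ξ.sum = (a : ℂ) + (b : ℂ) * Complex.I + ((c : ℂ) + (d : ℂ) * Complex.I) * z8 ∧
      (a + b + c + d) % 2 = (Ξ.card : ℤ) % 2 := by
  induction Ξ using Multiset.induction_on with
  | empty => exact ⟨0, 0, 0, 0, by simp, by simp⟩
  | cons w s ih =>
    obtain ⟨a, b, c, d, hs, hp⟩ := ih (fun x hx => hr x (Multiset.mem_cons_of_mem hx))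
    obtain ⟨a', b', c', d', hw, hodd⟩ := root_decomp w (hr w (Multiset.mem_cons_self w s))
    refine ⟨a + a', b + b', c + c', d + d', ?_, ?_⟩
    · rw [Multiset.sum_cons, hs, hw]; push_cast; ring
    · obtain ⟨k, hk⟩ := hodd
      simp only [Multiset.card_cons]
      push_cast
      omega

lemma key (m n : ℤ) (h : (m : ℝ) = (Real.sqrt 2 / 2) * n) : m = 0 ∧ n = 0 := by
  have hirr : Irrational (Real.sqrt 2 / 2) := by
    have := irrational_sqrt_two.div_natCast (m := 2) (by norm_num)
    simpa using this
  by_cases hn : n = 0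
  · subst hn; constructor
    · exact_mod_cast by simpa using h
    · rfl
  · exfalso
    apply hirr
    refine ⟨(m : ℚ) / (n : ℚ), ?_⟩
    have hn' : (n : ℝ) ≠ 0 := Int.cast_ne_zero.mpr hn
    push_cast
    field_simp
    linarith [h]

theorem sum_of_eighth_roots_odd (Ξ : Multiset ℂ) (hroot : ∀ z ∈ Ξ, z ^ 8 = 1)
    (hcard : (Ξ.map fun z => z ^ 8).sum = (141 : ℂ))
    (h : ℤ) (hsum : Ξ.sum = (h : ℂ)) :
    Odd h := by
  have hcard' : Ξ.card = 141 := by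
    have h1 : (Ξ.map fun z => z ^ 8).sum = (Ξ.card : ℂ) := by
      rw [Multiset.map_congr rfl hroot]
      simp
    have : ((Ξ.card : ℕ) : ℂ) = ((141 : ℕ) : ℂ) := by rw [← h1, hcard]; norm_num
    exact_mod_cast this
  obtain ⟨a, b, c, d, hs, hp⟩ := sum_decomp Ξ hroot
  rw [hcard'] at hp
  rw [hsum] at hs
  have eq2 : (h : ℂ) = ((a + Real.sqrt 2 / 2 * c - Real.sqrt 2 / 2 * d : ℝ) : ℂ) +
      ((b + Real.sqrt 2 / 2 * c + Real.sqrt 2 / 2 * d : ℝ) : ℂ) * Complex.I := by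
    rw [hs]; unfold z8; push_cast; linear_combination ((d : ℂ) * ((Real.sqrt 2 : ℝ) : ℂ) / 2) * Complex.I_sq
  have him : (b : ℝ) + Real.sqrt 2 / 2 * c + Real.sqrt 2 / 2 * d = 0 := by
    have := congrArg Complex.im eq2
    simpa using this.symm
  have hre : (h : ℝ) = (a : ℝ) + Real.sqrt 2 / 2 * c - Real.sqrt 2 / 2 * d := by
    have := congrArg Complex.re eq2
    simpa using this
  have k1 : b = 0 ∧ -(c + d) = 0 := by
    apply key
    push_cast
    linarith [him]
  have k2 : (h - a) = 0 ∧ (c - d) = 0 := by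
    apply key
    push_cast
    linarith [hre]
  rw [Int.odd_iff]
  omega
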